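/- Let (E_λ)_{λ∈Γ} be a nested family of strongly invariant sequence spaces over a Banach space X, and let ℕ' ⊆ ℕ be such that both ℕ' and ℕ∖ℕ' are infinite. If x = (x_j)_{j=1}^∞ ∈ X^ℕ and x ∉ ⋃_{λ∈Γ} E_λ, then either the subsequence (x_j)_{j∈ℕ'} (indices taken in increasing order) does not belong to ⋃_{λ∈Γ} E_λ, or the subsequence (x_j)_{j∈ℕ∖ℕ'} does not belong to ⋃_{λ∈Γ} E_λ. -/

import Mathlib

/-- The zero-free version `x⁰` of a sequence: if `x` has infinitely many nonzero
coordinates, it enumerates them in increasing order of index; otherwise it is `0`. -/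
noncomputable def zeroFree {X : Type*} [Zero X] (x : ℕ → X) : ℕ → X :=
  haveI := Classical.dec ({j | x j ≠ 0}.Infinite)
  if {j | x j ≠ 0}.Infinite then (fun k => x (Nat.nth (fun j => x j ≠ 0) k)) else 0

/-- An invariant sequence space over a Banach space `X`: an infinite-dimensional Banach
space of `X`-valued sequences satisfying (b1) and (b2) of Definition 2.1 of [BDFP]. -/
structure InvSeqSpace (𝕂 : Type*) [RCLike 𝕂] (X : Type*)
    [NormedAddCommGroup X] [NormedSpace 𝕂 X] where
  carrier : Submodule 𝕂 (ℕ → X)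
  nrm : (ℕ → X) → ℝ
  K : ℝ
  infinite_dim : ¬ Module.Finite 𝕂 carrier
  nrm_nonneg : ∀ x ∈ carrier, 0 ≤ nrm x
  nrm_eq_zero_iff : ∀ x ∈ carrier, (nrm x = 0 ↔ x = 0)
  nrm_add_le : ∀ x ∈ carrier, ∀ y ∈ carrier, nrm (x + y) ≤ nrm x + nrm y
  nrm_smul : ∀ (a : 𝕂), ∀ x ∈ carrier, nrm (a • x) = ‖a‖ * nrm x
  complete : ∀ u : ℕ → (ℕ → X), (∀ n, u n ∈ carrier) →
    (∀ ε : ℝ, 0 < ε → ∃ N, ∀ m ≥ N, ∀ n ≥ N, nrm (u m - u n) < ε) →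
    ∃ v ∈ carrier, ∀ ε : ℝ, 0 < ε → ∃ N, ∀ n ≥ N, nrm (u n - v) < ε
  zeroFree_mem_iff : ∀ x : ℕ → X, zeroFree x ≠ 0 → (x ∈ carrier ↔ zeroFree x ∈ carrier)
  nrm_le_K_mul : ∀ x : ℕ → X, zeroFree x ≠ 0 → x ∈ carrier → nrm x ≤ K * nrm (zeroFree x)
  coord_le_nrm : ∀ x ∈ carrier, ∀ j, ‖x j‖ ≤ nrm x

/-- A strongly invariant sequence space: an invariant sequence space containing `c₀₀(X)`
and such that a sequence belongs to it iff all its subsequences do. -/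
structure StrongInvSeqSpace (𝕂 : Type*) [RCLike 𝕂] (X : Type*)
    [NormedAddCommGroup X] [NormedSpace 𝕂 X] extends InvSeqSpace 𝕂 X where
  c00_subset : ∀ x : ℕ → X, (∃ N, ∀ j, N ≤ j → x j = 0) → x ∈ carrier
  mem_iff_subseq : ∀ x : ℕ → X,
    x ∈ carrier ↔ ∀ g : ℕ → ℕ, StrictMono g → (fun k => x (g k)) ∈ carrier

/-- `f` is compatible with a sequence space `E` (Definition 2.3 of [NP]). -/
def Compatible (𝕂 : Type*) [RCLike 𝕂] {X Y : Type*}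
    [NormedAddCommGroup X] [NormedSpace 𝕂 X] [NormedAddCommGroup Y] [NormedSpace 𝕂 Y]
    (f : X → Y) (E : Set (ℕ → Y)) : Prop :=
  f 0 = 0 ∧ ∀ (x : ℕ → X) (a : 𝕂), a ≠ 0 →
    (fun j => f (x j)) ∉ E → (fun j => f (a • x j)) ∉ E

/-- The set `G(E, f, (E_λ)_{λ∈Γ})`. -/
def Gset {𝕂 : Type*} [RCLike 𝕂] {X Y Γ : Type*}
    [NormedAddCommGroup X] [NormedSpace 𝕂 X] [NormedAddCommGroup Y] [NormedSpace 𝕂 Y]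
    (E : InvSeqSpace 𝕂 X) (f : X → Y) (F : Γ → StrongInvSeqSpace 𝕂 Y) : Set (ℕ → X) :=
  {x | x ∈ E.carrier ∧ (fun j => f (x j)) ∉ ⋃ lam, ((F lam).carrier : Set (ℕ → Y))}

/-- `W` is closed in the sequence space `E` (w.r.t. the metric induced by `E.nrm`). -/
def ClosedIn {𝕂 : Type*} [RCLike 𝕂] {X : Type*}
    [NormedAddCommGroup X] [NormedSpace 𝕂 X]
    (E : InvSeqSpace 𝕂 X) (W : Set (ℕ → X)) : Prop :=
  ∀ x ∈ E.carrier, (∀ ε : ℝ, 0 < ε → ∃ y ∈ W, E.nrm (x - y) < ε) → x ∈ W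

lemma nth_image_comp {f : ℕ → ℕ} (hf : StrictMono f) {q : ℕ → Prop}
    (hq : (setOf q).Infinite) :
    Nat.nth (fun j => j ∈ f '' setOf q) = f ∘ Nat.nth q := by
  have hinf : {j | j ∈ f '' setOf q}.Infinite := hq.image hf.injective.injOn
  have h1 := Nat.nth_strictMono hinf
  have h2 := hf.comp (Nat.nth_strictMono hq)
  refine (h1.range_inj h2).1 ?_
  rw [Nat.range_nth_of_infinite hinf, Set.range_comp, Nat.range_nth_of_infinite hq]
  rfl

lemma padded_mem {𝕂 X : Type*} [RCLike 𝕂] [NormedAddCommGroup X] [NormedSpace 𝕂 X]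
    (E : StrongInvSeqSpace 𝕂 X) (S : Set ℕ) (hS : S.Infinite) (x : ℕ → X)
    (h : (fun k => x (Nat.nth (fun j => j ∈ S) k)) ∈ E.carrier) :
    S.indicator x ∈ E.carrier := by
  classical
  set y : ℕ → X := S.indicator x with hy
  set u : ℕ → X := fun k => x (Nat.nth (fun j => j ∈ S) k) with hu
  have hSset : setOf (fun j => j ∈ S) = S := rfl
  have hS' : (setOf fun j => j ∈ S).Infinite := by rwa [hSset]
  have huy : ∀ k, u k = y (Nat.nth (fun j => j ∈ S) k) := by
    intro k
    have : Nat.nth (fun j => j ∈ S) k ∈ S := Nat.nth_mem_of_infinite hS' k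
    simp [hu, hy, Set.indicator_of_mem this]
  by_cases hfin : {j | y j ≠ 0}.Finite
  · -- eventually zero
    apply E.c00_subset
    rcases hfin.bddAbove with ⟨N, hN⟩
    refine ⟨N + 1, fun j hj => ?_⟩
    by_contra hj0
    have := hN (hj0 : j ∈ {j | y j ≠ 0})
    omega
  · have hinf : {j | y j ≠ 0}.Infinite := hfin
    set q : ℕ → Prop := fun k => u k ≠ 0 with hq
    have himg : {j | y j ≠ 0} = Nat.nth (fun j => j ∈ S) '' setOf q := by
      ext j
      constructor
      · intro hj
        have hjS : j ∈ S := by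
          by_contra hjS
          exact hj (Set.indicator_of_notMem hjS x)
        refine ⟨Nat.count (fun j => j ∈ S) j, ?_, Nat.nth_count hjS⟩
        show u _ ≠ 0
        rw [huy, Nat.nth_count hjS]; exact hj
      · rintro ⟨k, hk, rfl⟩
        show y _ ≠ 0
        rw [← huy]; exact hk
    have hqinf : (setOf q).Infinite := by
      intro hfq
      exact hinf (by rw [himg]; exact hfq.image _)
    have hnth : Nat.nth (fun j => y j ≠ 0) = Nat.nth (fun j => j ∈ S) ∘ Nat.nth q := by
      have := nth_image_comp (Nat.nth_strictMono hS') hqinf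
      rw [← this]
      ext j
      simp only [← himg, Set.mem_setOf_eq]
    have hzy : zeroFree y = zeroFree u := by
      rw [zeroFree, zeroFree, if_pos hinf, if_pos (show {j | u j ≠ 0}.Infinite from hqinf)]
      funext n
      rw [hnth]
      exact (huy _).symm
    have hzu0 : zeroFree u ≠ 0 := by
      intro h0
      have : (zeroFree u) 0 = 0 := by rw [h0]; rfl
      rw [zeroFree, if_pos (show {j | u j ≠ 0}.Infinite from hqinf)] at this
      exact Nat.nth_mem_of_infinite hqinf 0 this
    have hu_mem : u ∈ E.carrier := h
    have hzu_mem : zeroFree u ∈ E.carrier := (E.zeroFree_mem_iff u hzu0).1 hu_mem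
    have : zeroFree y ≠ 0 := by rw [hzy]; exact hzu0
    exact (E.zeroFree_mem_iff y this).2 (by rw [hzy]; exact hzu_mem)


/-- **Lemma 2.2.** Let `(E_λ)_{λ∈Γ}` be a nested family of strongly invariant sequence
spaces and `ℕ' ⊆ ℕ` with `ℕ'` and `ℕ∖ℕ'` infinite. If `x ∉ ⋃_{λ∈Γ} E_λ`, then either the
subsequence of `x` indexed by `ℕ'` or the one indexed by `ℕ∖ℕ'` is not in `⋃_{λ∈Γ} E_λ`. -/
theorem subseq_not_mem_of_nested
    {𝕂 X Γ : Type*} [RCLike 𝕂]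
    [NormedAddCommGroup X] [NormedSpace 𝕂 X] [CompleteSpace X]
    (F : Γ → StrongInvSeqSpace 𝕂 X)
    (hnested : ∀ l₁ l₂ : Γ,
      ((F l₁).carrier : Set (ℕ → X)) ⊆ ((F l₂).carrier : Set (ℕ → X)) ∨
      ((F l₂).carrier : Set (ℕ → X)) ⊆ ((F l₁).carrier : Set (ℕ → X)))
    (S : Set ℕ) (hS : S.Infinite) (hSc : Sᶜ.Infinite)
    (x : ℕ → X) (hx : x ∉ ⋃ lam, ((F lam).carrier : Set (ℕ → X))) :
    (fun k => x (Nat.nth (fun j => j ∈ S) k)) ∉ ⋃ lam, ((F lam).carrier : Set (ℕ → X)) ∨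
    (fun k => x (Nat.nth (fun j => j ∈ Sᶜ) k)) ∉ ⋃ lam, ((F lam).carrier : Set (ℕ → X)) := by
  by_contra hcon
  push_neg at hcon
  obtain ⟨h1, h2⟩ := hcon
  rw [Set.mem_iUnion] at h1 h2
  obtain ⟨l₁, h1⟩ := h1
  obtain ⟨l₂, h2⟩ := h2
  obtain hsub | hsub := hnested l₁ l₂
  case' inl => refine absurd ?_ hx; rw [Set.mem_iUnion]; refine ⟨l₂, ?_⟩
  case' inr => refine absurd ?_ hx; rw [Set.mem_iUnion]; refine ⟨l₁, ?_⟩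
  all_goals {
    first
    | (have hy := padded_mem (F l₂) S hS x (hsub h1)
       have hz := padded_mem (F l₂) Sᶜ hSc x h2)
    | (have hy := padded_mem (F l₁) S hS x h1
       have hz := padded_mem (F l₁) Sᶜ hSc x (hsub h2))
    rw [show x = S.indicator x + Sᶜ.indicator x from (Set.indicator_self_add_compl S x).symm]
    exact Submodule.add_mem _ hy hz
  }
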